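/- Let (S, A, T, γ) be a finite MDP with γ ∈ [0,1], horizon T_h ≥ 1 and reward r : S × A → ℝ, and let Q_t, V_t (0 ≤ t ≤ T_h−1) be given by soft value iteration. Then for every time-dependent policy π (with π_t(·|s) a probability distribution on A for each t < T_h and s ∈ S) and every state s ∈ S, the entropy-regularized return satisfies E_π[ Σ_{t=0}^{T_h−1} γ^t ( r(S_t, A_t) − log π_t(A_t|S_t) ) | S_0 = s ] ≤ V_0(s), where terms with π_t(a|s) = 0 contribute 0 (convention 0·log 0 = 0). -/

import Mathlib

/-!
STATEMENT 0: For a finite MDP with discount `γ ∈ [0,1]`, horizon `Th ≥ 1` and reward `r`,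
the entropy-regularised return of any time-dependent policy `π` starting at any state `s`
is at most the soft value `V_0(s)` produced by soft value iteration.
-/

/-- Soft value iteration, indexed by the number of remaining steps after the current one:
`softQ T γ r k = Q_{Th-1-k}` when the horizon is `Th`.  Thus `softQ T γ r 0 s a = r s a`
(the last step `t = Th-1`) and
`softQ T γ r (k+1) s a = r s a + γ ∑_{s'} T(s'|s,a) V(k, s')`. -/
noncomputable def softQ {S A : Type*} [Fintype S] [Fintype A]
    (T : S → A → S → ℝ) (γ : ℝ) (r : S → A → ℝ) : ℕ → S → A → ℝ
  | 0 => fun s a => r s a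
  | k + 1 => fun s a =>
      r s a + γ * ∑ s', T s a s' * Real.log (∑ a', Real.exp (softQ T γ r k s' a'))

/-- Soft state-value: `V(s) = log ∑_a exp Q(s,a)` (indexed by remaining steps). -/
noncomputable def softV {S A : Type*} [Fintype S] [Fintype A]
    (T : S → A → S → ℝ) (γ : ℝ) (r : S → A → ℝ) (k : ℕ) (s : S) : ℝ :=
  Real.log (∑ a, Real.exp (softQ T γ r k s a))

/-- `expSum T π φ t k s` is the expectation `E_π[ ∑_{t'=t}^{t+k-1} φ t' S_{t'} A_{t'} | S_t = s ]`
over trajectories generated from state `s` at time `t` by the time-dependent policy `π`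
and the transition probabilities `T`. -/
noncomputable def expSum {S A : Type*} [Fintype S] [Fintype A]
    (T : S → A → S → ℝ) (π : ℕ → S → A → ℝ) (φ : ℕ → S → A → ℝ) : ℕ → ℕ → S → ℝ
  | _, 0, _ => 0
  | t, k + 1, s => ∑ a, π t s a * (φ t s a + ∑ s', T s a s' * expSum T π φ (t + 1) k s')


lemma gibbs_aux {A : Type*} [Fintype A] [Nonempty A] (p q : A → ℝ)
    (hp : ∀ a, 0 ≤ p a) (hp1 : ∑ a, p a = 1) :
    ∑ a, p a * (q a - Real.log (p a)) ≤ Real.log (∑ a, Real.exp (q a)) := by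
  set Z := ∑ a, Real.exp (q a) with hZ
  have hZpos : 0 < Z := Finset.sum_pos (fun a _ => Real.exp_pos _) Finset.univ_nonempty
  have key : ∀ a, p a * (q a - Real.log (p a)) ≤ Real.exp (q a) / Z - p a + p a * Real.log Z := by
    intro a
    rcases eq_or_lt_of_le (hp a) with h | h
    · rw [← h]; simp; positivity
    · have hlog : Real.log (Real.exp (q a) / (p a * Z)) ≤ Real.exp (q a) / (p a * Z) - 1 :=
        Real.log_le_sub_one_of_pos (by positivity)
      have hexpand : Real.log (Real.exp (q a) / (p a * Z)) = q a - Real.log (p a) - Real.log Z := by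
        rw [Real.log_div (Real.exp_ne_zero _) (by positivity), Real.log_exp,
          Real.log_mul (ne_of_gt h) (ne_of_gt hZpos)]
        ring
      have hmul := mul_le_mul_of_nonneg_left hlog (le_of_lt h)
      rw [hexpand] at hmul
      have h2 : p a * (Real.exp (q a) / (p a * Z) - 1) = Real.exp (q a) / Z - p a := by
        field_simp
      nlinarith [hmul]
  calc ∑ a, p a * (q a - Real.log (p a))
      ≤ ∑ a, (Real.exp (q a) / Z - p a + p a * Real.log Z) :=
        Finset.sum_le_sum (fun a _ => key a)
    _ = Real.log Z := by
        rw [Finset.sum_add_distrib, Finset.sum_sub_distrib, ← Finset.sum_div, ← hZ,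
          ← Finset.sum_mul, hp1]
        field_simp
        ring

lemma soft_key {S A : Type*} [Fintype S] [Fintype A] [Nonempty S] [Nonempty A]
    (T : S → A → S → ℝ)
    (hT0 : ∀ s a s', 0 ≤ T s a s') (hT1 : ∀ s a, ∑ s', T s a s' = 1)
    (γ : ℝ) (hγ0 : 0 ≤ γ)
    (Th : ℕ) (r : S → A → ℝ) (π : ℕ → S → A → ℝ)
    (hπ0 : ∀ t s a, t < Th → 0 ≤ π t s a)
    (hπ1 : ∀ t s, t < Th → ∑ a, π t s a = 1) :
    ∀ k t, t + k + 1 ≤ Th → ∀ s,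
      expSum T π (fun t s a => γ ^ t * (r s a - Real.log (π t s a))) t (k + 1) s
        ≤ γ ^ t * softV T γ r k s := by
  intro k
  induction k with
  | zero =>
    intro t ht s
    have htT : t < Th := by omega
    have h1 : expSum T π (fun t s a => γ ^ t * (r s a - Real.log (π t s a))) t 1 s
        = γ ^ t * ∑ a, π t s a * (r s a - Real.log (π t s a)) := by
      simp only [expSum, Finset.mul_sum]
      refine Finset.sum_congr rfl fun a _ => ?_
      simp [expSum]
      ring
    rw [h1, softV]
    have := gibbs_aux (π t s) (r s) (fun a => hπ0 t s a htT) (hπ1 t s htT)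
    have hQ : softQ T γ r 0 s = r s := rfl
    rw [hQ]
    exact mul_le_mul_of_nonneg_left this (pow_nonneg hγ0 t)
  | succ k ih =>
    intro t ht s
    have htT : t < Th := by omega
    have step : expSum T π (fun t s a => γ ^ t * (r s a - Real.log (π t s a))) t (k + 2) s
        = ∑ a, π t s a * (γ ^ t * (r s a - Real.log (π t s a))
            + ∑ s', T s a s' *
              expSum T π (fun t s a => γ ^ t * (r s a - Real.log (π t s a))) (t + 1) (k + 1) s') := rfl
    rw [step]
    have hbound : ∀ a, π t s a * (γ ^ t * (r s a - Real.log (π t s a))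
            + ∑ s', T s a s' *
              expSum T π (fun t s a => γ ^ t * (r s a - Real.log (π t s a))) (t + 1) (k + 1) s')
        ≤ π t s a * (γ ^ t * (softQ T γ r (k + 1) s a - Real.log (π t s a))) := by
      intro a
      refine mul_le_mul_of_nonneg_left ?_ (hπ0 t s a htT)
      have hinner : ∑ s', T s a s' *
              expSum T π (fun t s a => γ ^ t * (r s a - Real.log (π t s a))) (t + 1) (k + 1) s'
          ≤ γ ^ (t + 1) * ∑ s', T s a s' * softV T γ r k s' := by
        rw [Finset.mul_sum]
        refine Finset.sum_le_sum fun s' _ => ?_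
        have := ih (t + 1) (by omega) s'
        calc T s a s' * expSum T π (fun t s a => γ ^ t * (r s a - Real.log (π t s a))) (t + 1) (k + 1) s'
            ≤ T s a s' * (γ ^ (t + 1) * softV T γ r k s') :=
              mul_le_mul_of_nonneg_left this (hT0 s a s')
          _ = γ ^ (t + 1) * (T s a s' * softV T γ r k s') := by ring
      have heq : γ ^ t * (softQ T γ r (k + 1) s a - Real.log (π t s a))
          = γ ^ t * (r s a - Real.log (π t s a))
            + γ ^ (t + 1) * ∑ s', T s a s' * softV T γ r k s' := by
        show γ ^ t * ((r s a + γ * ∑ s', T s a s' * Real.log (∑ a', Real.exp (softQ T γ r k s' a')))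
              - Real.log (π t s a)) = _
        simp only [softV]
        ring
      linarith
    calc (∑ a, π t s a * (γ ^ t * (r s a - Real.log (π t s a))
            + ∑ s', T s a s' *
              expSum T π (fun t s a => γ ^ t * (r s a - Real.log (π t s a))) (t + 1) (k + 1) s'))
        ≤ ∑ a, π t s a * (γ ^ t * (softQ T γ r (k + 1) s a - Real.log (π t s a))) :=
          Finset.sum_le_sum fun a _ => hbound a
      _ = γ ^ t * ∑ a, π t s a * (softQ T γ r (k + 1) s a - Real.log (π t s a)) := by
          rw [Finset.mul_sum]; refine Finset.sum_congr rfl fun a _ => ?_; ring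
      _ ≤ γ ^ t * softV T γ r (k + 1) s := by
          refine mul_le_mul_of_nonneg_left ?_ (pow_nonneg hγ0 t)
          exact gibbs_aux (π t s) (softQ T γ r (k + 1) s) (fun a => hπ0 t s a htT) (hπ1 t s htT)

theorem stmt0 {S A : Type*} [Fintype S] [Fintype A] [Nonempty S] [Nonempty A]
    (T : S → A → S → ℝ)
    (hT0 : ∀ s a s', 0 ≤ T s a s') (hT1 : ∀ s a, ∑ s', T s a s' = 1)
    (γ : ℝ) (hγ : γ ∈ Set.Icc (0 : ℝ) 1)
    (Th : ℕ) (hTh : 1 ≤ Th) (r : S → A → ℝ)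
    (π : ℕ → S → A → ℝ)
    (hπ0 : ∀ t s a, t < Th → 0 ≤ π t s a)
    (hπ1 : ∀ t s, t < Th → ∑ a, π t s a = 1)
    (s : S) :
    expSum T π (fun t s a => γ ^ t * (r s a - Real.log (π t s a))) 0 Th s
      ≤ softV T γ r (Th - 1) s := by
  obtain ⟨k, rfl⟩ : ∃ k, Th = k + 1 := ⟨Th - 1, by omega⟩
  simpa using soft_key T hT0 hT1 γ hγ.1 (k + 1) r π hπ0 hπ1 k 0 (by omega) s
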